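/- A bicomplex matrix A = A₁ + jA₂ ∈ 𝔹ℂ^{n×n} is hyperbolic positive if and only if both of its idempotent components 𝒜₁ = A₁ − iA₂ and 𝒜₂ = A₁ + iA₂ are positive semidefinite complex matrices. -/

import Mathlib

open Complex Matrix Kronecker BigOperators

open scoped ComplexOrder

/-- Bicomplex numbers, modeled as pairs `(z₁, z₂) ∈ ℂ × ℂ` representing `z₁ + j z₂`.
Addition is the componentwise (Prod) addition. -/
abbrev BC : Type := ℂ × ℂ

noncomputable section

/-- Bicomplex multiplication: `(z₁,z₂)·(w₁,w₂) = (z₁w₁ − z₂w₂, z₁w₂ + z₂w₁)`. -/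
def bcMul (z w : BC) : BC := (z.1 * w.1 - z.2 * w.2, z.1 * w.2 + z.2 * w.1)

/-- The `*`-conjugate `Z* = conj z₁ − j conj z₂`. -/
def bcStar (z : BC) : BC := ((starRingEnd ℂ) z.1, -((starRingEnd ℂ) z.2))

/-- First idempotent component `λ₁ = z₁ − i z₂`. -/
def idem1 (z : BC) : ℂ := z.1 - Complex.I * z.2

/-- Second idempotent component `λ₂ = z₁ + i z₂`. -/
def idem2 (z : BC) : ℂ := z.1 + Complex.I * z.2

/-- Membership in `𝔻⁺`: both idempotent components are nonnegative real numbers. -/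
def inDplus (z : BC) : Prop :=
  (idem1 z).im = 0 ∧ 0 ≤ (idem1 z).re ∧ (idem2 z).im = 0 ∧ 0 ≤ (idem2 z).re

/-- A bicomplex matrix `A = A₁ + j A₂` is a pair of complex matrices. -/
abbrev BCMat (I J : Type) : Type := Matrix I J ℂ × Matrix I J ℂ

/-- Bicomplex matrix multiplication, induced by bicomplex multiplication. -/
def bmul {I J K : Type} [Fintype J] (A : BCMat I J) (B : BCMat J K) : BCMat I K :=
  (A.1 * B.1 - A.2 * B.2, A.1 * B.2 + A.2 * B.1)

/-- `(A*)ᵗ`: the entrywise `*`-conjugate followed by transpose. -/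
def bcStarT {I J : Type} (A : BCMat I J) : BCMat J I := (A.1ᴴ, -(A.2ᴴ))

/-- The `(j,k)` entry of a bicomplex matrix, as a bicomplex number. -/
def bcEntry {I J : Type} (A : BCMat I J) (j : I) (k : J) : BC := (A.1 j k, A.2 j k)

/-- First idempotent component `𝒜₁ = A₁ − i A₂` of a bicomplex matrix. -/
def midem1 {I J : Type} (A : BCMat I J) : Matrix I J ℂ := A.1 - Complex.I • A.2

/-- Second idempotent component `𝒜₂ = A₁ + i A₂` of a bicomplex matrix. -/
def midem2 {I J : Type} (A : BCMat I J) : Matrix I J ℂ := A.1 + Complex.I • A.2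

/-- The bicomplex number `(c*)ᵗ · A · c`. -/
def quadForm {I : Type} [Fintype I] (A : BCMat I I) (c : I → BC) : BC :=
  ∑ j, ∑ k, bcMul (bcStar (c j)) (bcMul (bcEntry A j k) (c k))

/-- `A` is hyperbolic positive if `(c*)ᵗ · A · c ∈ 𝔻⁺` for every bicomplex vector `c`. -/
def HypPos {I : Type} [Fintype I] (A : BCMat I I) : Prop :=
  ∀ c : I → BC, inDplus (quadForm A c)

/-- Bicomplex trace `Tr(A) = Tr(A₁) + j Tr(A₂)`. -/
def bcTrace {I : Type} [Fintype I] (A : BCMat I I) : BC := (A.1.trace, A.2.trace)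

/-- The bicomplex tensor product
`A ⊗ⱼ B = (A₁⊗B₁ − A₂⊗B₂) + j (A₁⊗B₂ + A₂⊗B₁)`. -/
def bkron {I J K L : Type} (A : BCMat I J) (B : BCMat K L) : BCMat (I × K) (J × L) :=
  (A.1 ⊗ₖ B.1 - A.2 ⊗ₖ B.2, A.1 ⊗ₖ B.2 + A.2 ⊗ₖ B.1)

end


section Aux
open Complex Matrix
open scoped ComplexOrder

lemma idem1_bcMul (z w : BC) : idem1 (bcMul z w) = idem1 z * idem1 w := by
  simp only [idem1, bcMul]
  have h := Complex.I_sq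
  ring_nf
  rw [Complex.I_sq]
  ring

lemma idem2_bcMul (z w : BC) : idem2 (bcMul z w) = idem2 z * idem2 w := by
  simp only [idem2, bcMul]
  ring_nf
  rw [Complex.I_sq]
  ring

lemma idem1_bcStar (z : BC) : idem1 (bcStar z) = (starRingEnd ℂ) (idem1 z) := by
  simp only [idem1, bcStar, map_sub, _root_.map_mul, Complex.conj_I]
  ring

lemma idem2_bcStar (z : BC) : idem2 (bcStar z) = (starRingEnd ℂ) (idem2 z) := by
  simp only [idem2, bcStar, map_add, _root_.map_mul, Complex.conj_I]
  ring

lemma idem1_quadForm {m : Type} [Fintype m] (A : BCMat m m) (c : m → BC) :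
    idem1 (quadForm A c) =
      star (fun j => idem1 (c j)) ⬝ᵥ (midem1 A) *ᵥ (fun j => idem1 (c j)) := by
  have hsum : ∀ {s : Finset m} {f : m → BC}, idem1 (∑ j ∈ s, f j) = ∑ j ∈ s, idem1 (f j) := by
    intro s f
    simp only [idem1, Prod.fst_sum, Prod.snd_sum, Finset.mul_sum, Finset.sum_sub_distrib]
  simp only [quadForm, hsum, idem1_bcMul, idem1_bcStar]
  simp only [dotProduct, Matrix.mulVec, dotProduct, Finset.mul_sum,
    Pi.star_apply, RCLike.star_def]
  refine Finset.sum_congr rfl fun j _ => Finset.sum_congr rfl fun k _ => ?_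
  simp only [idem1, bcEntry, midem1, Matrix.sub_apply, Matrix.smul_apply, smul_eq_mul]
  try ring

lemma idem2_quadForm {m : Type} [Fintype m] (A : BCMat m m) (c : m → BC) :
    idem2 (quadForm A c) =
      star (fun j => idem2 (c j)) ⬝ᵥ (midem2 A) *ᵥ (fun j => idem2 (c j)) := by
  have hsum : ∀ {s : Finset m} {f : m → BC}, idem2 (∑ j ∈ s, f j) = ∑ j ∈ s, idem2 (f j) := by
    intro s f
    simp only [idem2, Prod.fst_sum, Prod.snd_sum, Finset.mul_sum, Finset.sum_add_distrib]
  simp only [quadForm, hsum, idem2_bcMul, idem2_bcStar]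
  simp only [dotProduct, Matrix.mulVec, dotProduct, Finset.mul_sum,
    Pi.star_apply, RCLike.star_def]
  refine Finset.sum_congr rfl fun j _ => Finset.sum_congr rfl fun k _ => ?_
  simp only [idem2, bcEntry, midem2, Matrix.add_apply, Matrix.smul_apply, smul_eq_mul]
  try ring

lemma inDplus_iff (z : BC) : inDplus z ↔ 0 ≤ idem1 z ∧ 0 ≤ idem2 z := by
  simp only [inDplus, Complex.le_def, Complex.zero_re, Complex.zero_im]
  constructor
  · rintro ⟨h1, h2, h3, h4⟩; exact ⟨⟨h2, h1.symm⟩, ⟨h4, h3.symm⟩⟩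
  · rintro ⟨⟨h1, h2⟩, ⟨h3, h4⟩⟩; exact ⟨h2.symm, h1, h4.symm, h3⟩

lemma posSemidef_of_quad {m : Type} [Fintype m] [DecidableEq m] (M : Matrix m m ℂ)
    (h : ∀ x : m → ℂ, 0 ≤ star x ⬝ᵥ M *ᵥ x) : M.PosSemidef := by
  refine Matrix.PosSemidef.of_dotProduct_mulVec_nonneg ?_ h
  rw [Matrix.isHermitian_iff_isSymmetric, LinearMap.isSymmetric_iff_inner_map_self_real]
  intro v
  set x := (WithLp.equiv 2 (m → ℂ)) v with hx
  have hq := h x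
  have him : (star x ⬝ᵥ M *ᵥ x).im = 0 := ((Complex.le_def.mp hq).2).symm
  have hconj : (starRingEnd ℂ) (star x ⬝ᵥ M *ᵥ x) = star x ⬝ᵥ M *ᵥ x :=
    Complex.conj_eq_iff_im.mpr him
  have hip : (inner ℂ (Matrix.toEuclideanLin M v) v : ℂ)
      = (starRingEnd ℂ) (star x ⬝ᵥ M *ᵥ x) := by
    rw [EuclideanSpace.inner_eq_star_dotProduct]
    rw [Matrix.ofLp_toEuclideanLin_apply]
    simp only [dotProduct, map_sum, _root_.map_mul, Pi.star_apply, RCLike.star_def,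
      RingHomCompTriple.comp_apply, Complex.conj_conj, ← hx]
    exact Finset.sum_congr rfl fun i _ => rfl
  rw [hip, hconj, hconj]

end Aux

noncomputable section

/-- `A` is hyperbolic positive iff both idempotent components
`𝒜₁ = A₁ − iA₂` and `𝒜₂ = A₁ + iA₂` are positive semidefinite complex matrices. -/
theorem hypPos_iff_idem_posSemidef {n : ℕ} (A : BCMat (Fin n) (Fin n)) :
    HypPos A ↔ (midem1 A).PosSemidef ∧ (midem2 A).PosSemidef := by
  constructor
  · intro h
    have key1 : ∀ x : Fin n → ℂ, 0 ≤ star x ⬝ᵥ (midem1 A) *ᵥ x := by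
      intro x
      have hc := h (fun j => ((x j) / 2, Complex.I * (x j) / 2))
      rw [inDplus_iff] at hc
      have hx : (fun j => idem1 ((fun j => ((x j) / 2, Complex.I * (x j) / 2)) j)) = x := by
        funext j
        simp only [idem1]
        have : Complex.I * (Complex.I * x j / 2) = -(x j) / 2 := by
          rw [show Complex.I * (Complex.I * x j / 2) = Complex.I ^ 2 * x j / 2 by ring,
            Complex.I_sq]; ring
        rw [this]; ring
      have := hc.1
      rwa [idem1_quadForm, hx] at this
    have key2 : ∀ x : Fin n → ℂ, 0 ≤ star x ⬝ᵥ (midem2 A) *ᵥ x := by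
      intro x
      have hc := h (fun j => ((x j) / 2, -(Complex.I * (x j)) / 2))
      rw [inDplus_iff] at hc
      have hx : (fun j => idem2 ((fun j => ((x j) / 2, -(Complex.I * (x j)) / 2)) j)) = x := by
        funext j
        simp only [idem2]
        have : Complex.I * (-(Complex.I * x j) / 2) = (x j) / 2 := by
          rw [show Complex.I * (-(Complex.I * x j) / 2) = -(Complex.I ^ 2) * x j / 2 by ring,
            Complex.I_sq]; ring
        rw [this]; ring
      have := hc.2
      rwa [idem2_quadForm, hx] at this
    exact ⟨posSemidef_of_quad _ key1, posSemidef_of_quad _ key2⟩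
  · rintro ⟨h1, h2⟩ c
    rw [inDplus_iff, idem1_quadForm, idem2_quadForm]
    exact ⟨h1.dotProduct_mulVec_nonneg _, h2.dotProduct_mulVec_nonneg _⟩

end
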